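/- Let q be a prime power, r | m, r < m, and D = F_{q^m} \ F_{q^r}. For a ∈ F_{q^m}*, the number of x ∈ D with Tr_{F_{q^m}/F_q}(a x) ≠ 0 equals (q−1)q^{m−1} if Tr_{F_{q^m}/F_{q^r}}(a) = 0, and equals (q−1)(q^{m−1} − q^{r−1}) otherwise. Consequently, the code C_D = {(Tr_{F_{q^m}/F_q}(ax))_{x∈D} : a ∈ F_{q^m}} is a two-weight [q^m − q^r, m] linear code with minimum distance (q−1)(q^{m−1} − q^{r−1}). -/

import Mathlib

open Finset in
open scoped Classical in
lemma aux_count {F V : Type*} [Field F] [Fintype F] [AddCommGroup V] [Module F V] [Fintype V]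
    (φ : V →ₗ[F] F) (v : V) (hv : φ v ≠ 0) {q n : ℕ}
    (hqF : Fintype.card F = q) (hV : Fintype.card V = q ^ n) (hn : 1 ≤ n) :
    (Finset.univ.filter (fun x => φ x = 0)).card = q ^ (n - 1) ∧
    (Finset.univ.filter (fun x => φ x ≠ 0)).card = (q - 1) * q ^ (n - 1) := by
  classical
  have hq2 : 2 ≤ q := hqF ▸ Fintype.one_lt_card
  have hs : Function.Surjective φ := by
    intro c
    refine ⟨(c * (φ v)⁻¹) • v, ?_⟩
    rw [map_smul, smul_eq_mul, mul_assoc, inv_mul_cancel₀ hv, mul_one]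
  obtain ⟨p, hp⟩ := (LinearMap.ker φ).exists_isCompl
  let e1 : V ≃ₗ[F] (LinearMap.ker φ × p) := (Submodule.prodEquivOfIsCompl _ _ hp).symm
  let e2 : p ≃ₗ[F] F :=
    (Submodule.quotientEquivOfIsCompl (LinearMap.ker φ) p hp).symm.trans
      (φ.quotKerEquivOfSurjective hs)
  have hcard : Nat.card V = Nat.card (LinearMap.ker φ) * Nat.card F := by
    rw [Nat.card_congr e1.toEquiv, Nat.card_prod, Nat.card_congr e2.toEquiv]
  have hker : Nat.card (LinearMap.ker φ) = (Finset.univ.filter (fun x => φ x = 0)).card := by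
    have h1 : Nat.card {x : V // φ x = 0} = (Finset.univ.filter (fun x => φ x = 0)).card := by
      rw [Nat.card_eq_fintype_card, Fintype.card_subtype]
    rw [← h1]
    exact Nat.card_congr (Equiv.subtypeEquivRight (by simp [LinearMap.mem_ker]))
  have hA : (Finset.univ.filter (fun x => φ x = 0)).card * q = q ^ n := by
    have h2 : Nat.card F = q := by rw [Nat.card_eq_fintype_card, hqF]
    have h3 := hcard
    rw [hker, h2, Nat.card_eq_fintype_card, hV] at h3
    exact h3.symm
  have hAval : (Finset.univ.filter (fun x => φ x = 0)).card = q ^ (n - 1) := by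
    have hqpos : 0 < q := by omega
    have h4 : (Finset.univ.filter (fun x => φ x = 0)).card * q = q ^ (n - 1) * q := by
      rw [hA, ← pow_succ]
      congr 1
      omega
    exact Nat.eq_of_mul_eq_mul_right hqpos h4
  refine ⟨hAval, ?_⟩
  simp only [ne_eq]
  have hsum := Finset.card_filter_add_card_filter_not
    (s := (Finset.univ : Finset V)) (p := fun x => φ x = 0)
  rw [Finset.card_univ, hV, hAval] at hsum
  have hle : q ^ (n - 1) ≤ q ^ n := Nat.pow_le_pow_right (by omega) (by omega)
  have : (q - 1) * q ^ (n - 1) = q ^ n - q ^ (n - 1) := by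
    rw [Nat.sub_mul, one_mul]
    congr 1
    rw [← pow_succ']
    congr 1
    omega
  omega

open scoped Classical in
theorem stmt_10 (q r m : ℕ) (F E K : Type*) [Field F] [Fintype F] [Field E] [Fintype E]
    [Field K] [Fintype K] [Algebra F E] [Algebra E K] [Algebra F K] [IsScalarTower F E K]
    (hq : Fintype.card F = q) (hE : Fintype.card E = q ^ r) (hK : Fintype.card K = q ^ m)
    (hr : 1 ≤ r) (hrm : r < m) (hdvd : r ∣ m)
    (D : Finset K) (hD : D = Finset.univ.filter (fun x => x ∉ Set.range (algebraMap E K)))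
    (wt : K → ℕ)
    (hwt : ∀ a, wt a = (D.filter (fun x => Algebra.trace F K (a * x) ≠ 0)).card) :
    (∀ a : K, a ≠ 0 →
        wt a = if Algebra.trace E K a = 0 then (q - 1) * q ^ (m - 1)
          else (q - 1) * (q ^ (m - 1) - q ^ (r - 1))) ∧
    D.card = q ^ m - q ^ r ∧
    Function.Injective (fun a : K => fun x : {x // x ∈ D} =>
      Algebra.trace F K (a * x.1)) ∧
    (∀ a : K, a ≠ 0 → (q - 1) * (q ^ (m - 1) - q ^ (r - 1)) ≤ wt a) ∧
    (∃ a : K, a ≠ 0 ∧ wt a = (q - 1) * (q ^ (m - 1) - q ^ (r - 1))) ∧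
    ((Finset.univ.filter (fun a : K => a ≠ 0)).image wt).card = 2 := by
  classical
  have hq2 : 2 ≤ q := hq ▸ Fintype.one_lt_card
  have hm1 : 1 ≤ m := le_of_lt (lt_of_le_of_lt hr hrm)
  set ι := algebraMap E K with hι
  have hιinj : Function.Injective ι := (algebraMap E K).injective
  have w2lt : q ^ (r - 1) < q ^ (m - 1) := Nat.pow_lt_pow_right (by omega) (by omega)
  have w2pos : 0 < (q - 1) * (q ^ (m - 1) - q ^ (r - 1)) :=
    Nat.mul_pos (by omega) (by omega)
  have wle : (q - 1) * (q ^ (m - 1) - q ^ (r - 1)) < (q - 1) * q ^ (m - 1) := by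
    have hsub : q ^ (m - 1) - q ^ (r - 1) < q ^ (m - 1) :=
      Nat.sub_lt (pow_pos (by omega) _) (pow_pos (by omega) _)
    exact (mul_lt_mul_iff_right₀ (show 0 < q - 1 by omega)).mpr hsub
  -- the key weight formula
  have key : ∀ a : K, a ≠ 0 →
      wt a = if Algebra.trace E K a = 0 then (q - 1) * q ^ (m - 1)
        else (q - 1) * (q ^ (m - 1) - q ^ (r - 1)) := by
    intro a ha
    set φa : K →ₗ[F] F := (Algebra.trace F K).comp (LinearMap.mulLeft F a) with hφa
    have hφa_apply : ∀ x, φa x = Algebra.trace F K (a * x) := fun x => rfl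
    obtain ⟨v, hv⟩ : ∃ v, φa v ≠ 0 := by
      by_contra h
      push_neg at h
      exact ha ((traceForm_nondegenerate F K).1 a (fun x => by
        simpa [Algebra.traceForm_apply, hφa_apply] using h x))
    have hN := aux_count φa v hv hq hK hm1
    simp only [hφa_apply] at hN
    set b := Algebra.trace E K a with hb
    have htr : ∀ y : E, Algebra.trace F K (a * ι y) = Algebra.trace F E (b * y) := by
      intro y
      rw [← Algebra.trace_trace (S := E) (x := a * ι y)]
      congr 1
      have h1 : a * ι y = y • a := by rw [Algebra.smul_def]; ring
      rw [h1, map_smul, smul_eq_mul, hb, mul_comm]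
    -- split the full count
    have hsplit : wt a +
        (Finset.univ.filter (fun x : K =>
          x ∈ Set.range ι ∧ Algebra.trace F K (a * x) ≠ 0)).card =
        (Finset.univ.filter (fun x : K => Algebra.trace F K (a * x) ≠ 0)).card := by
      have hsum := Finset.card_filter_add_card_filter_not
        (s := Finset.univ.filter (fun x : K => Algebra.trace F K (a * x) ≠ 0))
        (p := fun x => x ∈ Set.range ι)
      rw [Finset.filter_filter, Finset.filter_filter] at hsum
      have e1 : Finset.univ.filter (fun x : K =>
            Algebra.trace F K (a * x) ≠ 0 ∧ x ∈ Set.range ι) =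
          Finset.univ.filter (fun x : K =>
            x ∈ Set.range ι ∧ Algebra.trace F K (a * x) ≠ 0) :=
        Finset.filter_congr (fun x _ => by tauto)
      have e2 : Finset.univ.filter (fun x : K =>
            Algebra.trace F K (a * x) ≠ 0 ∧ x ∉ Set.range ι) =
          D.filter (fun x => Algebra.trace F K (a * x) ≠ 0) := by
        rw [hD, Finset.filter_filter]
        exact Finset.filter_congr (fun x _ => by tauto)
      rw [e1, e2] at hsum
      rw [hwt]
      omega
    have himg : Finset.univ.filter (fun x : K =>
          x ∈ Set.range ι ∧ Algebra.trace F K (a * x) ≠ 0) =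
        (Finset.univ.filter (fun y : E => Algebra.trace F E (b * y) ≠ 0)).image ι := by
      ext x
      simp only [Finset.mem_filter, Finset.mem_image, Finset.mem_univ, true_and, Set.mem_range]
      constructor
      · rintro ⟨⟨y, rfl⟩, hx⟩
        exact ⟨y, by rw [← htr]; exact hx, rfl⟩
      · rintro ⟨y, hy, rfl⟩
        exact ⟨⟨y, rfl⟩, by rw [htr]; exact hy⟩
    by_cases hb0 : b = 0
    · rw [if_pos hb0]
      have hempty : Finset.univ.filter (fun y : E => Algebra.trace F E (b * y) ≠ 0) = ∅ := by
        simp [hb0]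
      rw [himg, hempty, Finset.image_empty, Finset.card_empty] at hsplit
      omega
    · rw [if_neg hb0]
      set φb : E →ₗ[F] F := (Algebra.trace F E).comp (LinearMap.mulLeft F b) with hφb
      have hφb_apply : ∀ y, φb y = Algebra.trace F E (b * y) := fun y => rfl
      obtain ⟨w, hw⟩ : ∃ w, φb w ≠ 0 := by
        by_contra h
        push_neg at h
        exact hb0 ((traceForm_nondegenerate F E).1 b (fun y => by
          simpa [Algebra.traceForm_apply, hφb_apply] using h y))
      have hM := aux_count φb w hw hq hE hr
      simp only [hφb_apply] at hM
      have hMcard : (Finset.univ.filter (fun x : K =>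
          x ∈ Set.range ι ∧ Algebra.trace F K (a * x) ≠ 0)).card = (q - 1) * q ^ (r - 1) := by
        rw [himg, Finset.card_image_of_injective _ hιinj]
        exact hM.2
      have harith : (q - 1) * (q ^ (m - 1) - q ^ (r - 1)) + (q - 1) * q ^ (r - 1) =
          (q - 1) * q ^ (m - 1) := by
        rw [← Nat.mul_add, Nat.sub_add_cancel (le_of_lt w2lt)]
      rw [hMcard] at hsplit
      omega
  -- cardinality of D
  have hDcard : D.card = q ^ m - q ^ r := by
    have hsum := Finset.card_filter_add_card_filter_not
      (s := (Finset.univ : Finset K)) (p := fun x => x ∈ Set.range ι)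
    have himgE : Finset.univ.filter (fun x : K => x ∈ Set.range ι) =
        (Finset.univ : Finset E).image ι := by
      ext x
      simp [Set.mem_range, eq_comm]
    rw [Finset.card_univ, hK, himgE, Finset.card_image_of_injective _ hιinj,
      Finset.card_univ, hE] at hsum
    have : D.card = (Finset.univ.filter (fun x : K => ¬ x ∈ Set.range ι)).card := by rw [hD]
    omega
  -- a nonzero element with nonzero relative trace
  obtain ⟨x0, hx0⟩ : ∃ x : K, Algebra.trace E K x ≠ 0 := by
    by_contra h
    push_neg at h
    exact one_ne_zero ((traceForm_nondegenerate E K).1 1 (fun y => by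
      simpa [Algebra.traceForm_apply] using h y))
  have hx0ne : x0 ≠ 0 := fun h => hx0 (by rw [h, map_zero])
  -- a nonzero element with zero relative trace
  obtain ⟨a0, ha0mem, ha0ne⟩ : ∃ a0 ∈ Finset.univ.filter
      (fun x : K => Algebra.trace E K x = 0), a0 ≠ 0 := by
    have hEK := aux_count (Algebra.trace E K) x0 hx0 hE
      (show Fintype.card K = (q ^ r) ^ (m / r) by
        rw [hK, ← pow_mul, Nat.mul_div_cancel' hdvd])
      (by
        obtain ⟨k, hk⟩ := hdvd
        have : 2 ≤ k := by nlinarith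
        rw [hk, Nat.mul_div_cancel_left _ (by omega)]
        omega)
    have h2 : 2 ≤ (q ^ r) ^ (m / r - 1) := by
      have h2q : 2 ≤ q ^ r := le_trans hq2 (Nat.le_self_pow (by omega) q)
      obtain ⟨k, hk⟩ := hdvd
      have hk2 : 2 ≤ k := by nlinarith
      have : m / r - 1 ≠ 0 := by
        rw [hk, Nat.mul_div_cancel_left _ (by omega)]
        omega
      calc 2 ≤ q ^ r := h2q
        _ ≤ ((q ^ r)) ^ (m / r - 1) := Nat.le_self_pow this _
    rw [← hEK.1] at h2
    exact Finset.exists_mem_ne (by omega) 0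
  rw [Finset.mem_filter] at ha0mem
  -- lower bound
  have hlb : ∀ a : K, a ≠ 0 → (q - 1) * (q ^ (m - 1) - q ^ (r - 1)) ≤ wt a := by
    intro a ha
    rw [key a ha]
    split
    · omega
    · exact le_refl _
  refine ⟨key, hDcard, ?_, hlb, ⟨x0, hx0ne, by rw [key x0 hx0ne, if_neg hx0]⟩, ?_⟩
  · -- injectivity
    intro a b hab
    by_contra hne
    have hc : a - b ≠ 0 := sub_ne_zero.2 hne
    have hzero : ∀ x ∈ D, Algebra.trace F K ((a - b) * x) = 0 := by
      intro x hx
      have := congrFun hab ⟨x, hx⟩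
      simp only at this
      rw [sub_mul, map_sub, this, sub_self]
    have hwt0 : wt (a - b) = 0 := by
      rw [hwt, Finset.card_eq_zero, Finset.filter_eq_empty_iff]
      intro x hx
      simp [hzero x hx]
    have := hlb _ hc
    omega
  · -- two weights
    have himage : (Finset.univ.filter (fun a : K => a ≠ 0)).image wt =
        {(q - 1) * q ^ (m - 1), (q - 1) * (q ^ (m - 1) - q ^ (r - 1))} := by
      apply Finset.Subset.antisymm
      · intro w hw
        simp only [Finset.mem_image, Finset.mem_filter, Finset.mem_univ, true_and] at hw
        obtain ⟨a, ha, rfl⟩ := hw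
        rw [key a ha]
        simp only [Finset.mem_insert, Finset.mem_singleton]
        split
        · left; rfl
        · right; rfl
      · intro w hw
        simp only [Finset.mem_insert, Finset.mem_singleton] at hw
        simp only [Finset.mem_image, Finset.mem_filter, Finset.mem_univ, true_and]
        rcases hw with rfl | rfl
        · exact ⟨a0, ha0ne, by rw [key a0 ha0ne, if_pos ha0mem.2]⟩
        · exact ⟨x0, hx0ne, by rw [key x0 hx0ne, if_neg hx0]⟩
    rw [himage, Finset.card_insert_of_notMem (by simp only [Finset.mem_singleton]; omega), Finset.card_singleton]
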